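/- If R₀ > 1 then, with C* = βκS*/(κ + B*)², one has C* = βΛ(R₀κd(a₁a₂a₃ − δεω) + Ληa₂a₃)/(μκR₀²ρ). -/

import Mathlib

set_option maxHeartbeats 1600000 in
/-- If `R₀ > 1` then `C* = βκS*/(κ + B*)²` satisfies
`C* = βΛ(R₀κd(a₁a₂a₃ − δεω) + Ληa₂a₃)/(μκR₀²ρ)`. -/
theorem siqrb_Cstar_formula
    (Λ μ β κ η d ω δ ε α₁ α₂ : ℝ)
    (hΛ : 0 < Λ) (hμ : 0 < μ) (hβ : 0 < β) (hκ : 0 < κ) (hη : 0 < η) (hd : 0 < d)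
    (hω : 0 ≤ ω) (hδ : 0 ≤ δ) (hε : 0 ≤ ε) (hα₁ : 0 ≤ α₁) (hα₂ : 0 ≤ α₂)
    (a₁ a₂ a₃ ρ D R₀ Sstar Bstar Cstar : ℝ)
    (ha₁ : a₁ = δ + α₁ + μ) (ha₂ : a₂ = ε + α₂ + μ) (ha₃ : a₃ = ω + μ)
    (hρ : ρ = Λ * η * a₂ * a₃ + κ * d * (a₁ * a₂ * a₃ - δ * ε * ω))
    (hD : D = a₁ * a₂ * a₃ * μ + β * (a₁ * a₂ * a₃ - δ * ε * ω))
    (hR₀ : R₀ = β * Λ * η / (μ * κ * d * a₁))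
    (hR₀gt : 1 < R₀)
    (hS : Sstar = a₁ * ρ / (η * D))
    (hB : Bstar = β * Λ * η * a₂ * a₃ * (R₀ - 1) / (R₀ * D * d))
    (hCstar : Cstar = β * κ * Sstar / (κ + Bstar) ^ 2) :
    Cstar = β * Λ * (R₀ * κ * d * (a₁ * a₂ * a₃ - δ * ε * ω) + Λ * η * a₂ * a₃) /
      (μ * κ * R₀ ^ 2 * ρ) := by
  have ha₁0 : 0 < a₁ := by rw [ha₁]; linarith
  have ha₂0 : 0 < a₂ := by rw [ha₂]; linarith
  have ha₃0 : 0 < a₃ := by rw [ha₃]; linarith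
  have hX : 0 < a₁ * a₂ * a₃ - δ * ε * ω := by
    rw [ha₁, ha₂, ha₃]
    have h1 : δ * ε * ω ≤ (δ + α₁ + μ) * (ε + α₂ + μ) * ω := by
      apply mul_le_mul_of_nonneg_right _ hω
      exact mul_le_mul (by linarith) (by linarith) hε (by linarith)
    have h2 : 0 < (δ + α₁ + μ) * (ε + α₂ + μ) := by positivity
    nlinarith
  have hρ0 : 0 < ρ := by
    rw [hρ]
    have h1 : 0 < Λ * η * a₂ * a₃ := by positivity
    nlinarith [mul_pos (mul_pos hκ hd) hX]
  have hD0 : 0 < D := by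
    rw [hD]
    have h1 : 0 < a₁ * a₂ * a₃ * μ := by positivity
    nlinarith [mul_pos hβ hX]
  have hR₀0 : 0 < R₀ := lt_trans one_pos hR₀gt
  have hDne : a₁ * a₂ * a₃ * μ + β * (a₁ * a₂ * a₃ - δ * ε * ω) ≠ 0 := by
    rw [← hD]; exact hD0.ne'
  have hρne : ρ ≠ 0 := hρ0.ne'
  have key : κ + Bstar = κ * R₀ * μ * a₁ * ρ / (Λ * η * D) := by
    rw [hB, hR₀, hρ, hD]
    field_simp
    have hDne' : a₂ * a₃ * μ * a₁ + β * (a₂ * a₃ * a₁ - δ * ε * ω) ≠ 0 := by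
      intro h; apply hDne; linear_combination h
    field_simp
    ring
  rw [hCstar, hS, key, hR₀, hD]
  field_simp
  ring
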